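/- Let A be a Schur ring over a finite abelian group G, p a prime dividing |G|, H = {g ∈ G : g^p = 1}, and X a basic set of A. Then the set X^{[p]} = {x^p : x ∈ X, |xH ∩ X| ≢ 0 (mod p)} is an A-set (a union of basic sets of A). -/

import Mathlib

open Pointwise

/-- A Schur ring over a finite group `G`, given combinatorially by its partition
into basic sets with constant structure constants. -/
structure SchurRing (G : Type*) [Group G] where
  parts : Set (Set G)
  nonempty : ∀ X ∈ parts, X.Nonempty
  cover : ∀ g : G, ∃ X ∈ parts, g ∈ X
  disjoint : ∀ X ∈ parts, ∀ Y ∈ parts, X ≠ Y → X ∩ Y = ∅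
  one_mem : {1} ∈ parts
  inv_closed : ∀ X ∈ parts, X⁻¹ ∈ parts
  struct_const : ∀ X ∈ parts, ∀ Y ∈ parts, ∀ Z ∈ parts, ∀ z₁ ∈ Z, ∀ z₂ ∈ Z,
    Set.ncard {xy : G × G | xy.1 ∈ X ∧ xy.2 ∈ Y ∧ xy.1 * xy.2 = z₁} =
    Set.ncard {xy : G × G | xy.1 ∈ X ∧ xy.2 ∈ Y ∧ xy.1 * xy.2 = z₂}

/-- A subset of `G` is an `A`-set if it is a union of basic sets of `A`. -/
def SchurRing.IsASet {G : Type*} [Group G] (A : SchurRing G) (S : Set G) : Prop :=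
  ∀ g ∈ S, ∃ X ∈ A.parts, g ∈ X ∧ X ⊆ S

namespace SchurRingAux

open Finset

attribute [local instance] Classical.propDecidable

variable {G : Type*} [Group G]

/-- The part containing `g`. -/
noncomputable def part (A : SchurRing G) (g : G) : Set G := (A.cover g).choose

lemma part_mem (A : SchurRing G) (g : G) : part A g ∈ A.parts :=
  (A.cover g).choose_spec.1

lemma mem_part (A : SchurRing G) (g : G) : g ∈ part A g :=
  (A.cover g).choose_spec.2

lemma part_unique (A : SchurRing G) {W V : Set G} (hW : W ∈ A.parts) (hV : V ∈ A.parts)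
    {a : G} (haW : a ∈ W) (haV : a ∈ V) : W = V := by
  by_contra h
  have h2 := A.disjoint W hW V hV h
  have : a ∈ W ∩ V := ⟨haW, haV⟩
  rw [h2] at this
  exact this

lemma part_eq (A : SchurRing G) {W : Set G} (hW : W ∈ A.parts) {a : G} (ha : a ∈ W) :
    part A a = W :=
  part_unique A (part_mem A a) hW (mem_part A a) ha

/-- An element of the group algebra over `ZMod p` whose coefficients are constant on
every basic set of `A`. -/
def AConst (p : ℕ) (A : SchurRing G) (f : MonoidAlgebra (ZMod p) G) : Prop :=
  ∀ Z ∈ A.parts, ∀ z₁ ∈ Z, ∀ z₂ ∈ Z, f.coeff z₁ = f.coeff z₂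

lemma ncard_eq_card_filter {α : Type*} [Fintype α] (P : α → Prop) [DecidablePred P] :
    Set.ncard {x | P x} = #(univ.filter P) := by
  classical
  rw [← Set.toFinset_setOf]
  exact Set.ncard_eq_toFinset_card' _

section Mul

variable [Fintype G] (p : ℕ) (A : SchurRing G)

lemma mul_apply_univ (f g : MonoidAlgebra (ZMod p) G) (x : G) :
    (f * g).coeff x = ∑ ab : G × G, if ab.1 * ab.2 = x then f.coeff ab.1 * g.coeff ab.2 else 0 := by
  classical
  rw [MonoidAlgebra.coeff_mul, Fintype.sum_prod_type]
  rw [Finsupp.sum_fintype]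
  · refine Finset.sum_congr rfl fun a _ => ?_
    rw [Finsupp.sum_fintype]
    intro b
    simp
  · intro a
    simp [Finsupp.sum]

lemma AConst.mul {p : ℕ} {A : SchurRing G} {f g : MonoidAlgebra (ZMod p) G}
    (hf : AConst p A f) (hg : AConst p A g) : AConst p A (f * g) := by
  classical
  intro Z hZ z₁ hz₁ z₂ hz₂
  set Fv : Set G → ZMod p := fun W => if h : W ∈ A.parts then f.coeff (A.nonempty W h).choose else 0
    with hFvdef
  set Gv : Set G → ZMod p := fun V => if h : V ∈ A.parts then g.coeff (A.nonempty V h).choose else 0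
    with hGvdef
  have hFv : ∀ a : G, f.coeff a = Fv (part A a) := by
    intro a
    have h := part_mem A a
    rw [hFvdef]
    simp only [dif_pos h]
    exact hf _ h _ (mem_part A a) _ (A.nonempty _ h).choose_spec
  have hGv : ∀ a : G, g.coeff a = Gv (part A a) := by
    intro a
    have h := part_mem A a
    rw [hGvdef]
    simp only [dif_pos h]
    exact hg _ h _ (mem_part A a) _ (A.nonempty _ h).choose_spec
  have key : ∀ z : G, (f * g).coeff z = ∑ WV : Set G × Set G,
      Fv WV.1 * Gv WV.2 *
        (#(univ.filter fun ab : G × G =>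
            (part A ab.1, part A ab.2) = WV ∧ ab.1 * ab.2 = z) : ZMod p) := by
    intro z
    rw [mul_apply_univ]
    have h1 : ∀ ab : G × G, (if ab.1 * ab.2 = z then f.coeff ab.1 * g.coeff ab.2 else 0) =
        (if ab.1 * ab.2 = z then Fv (part A ab.1) * Gv (part A ab.2) else 0) := by
      intro ab; rw [hFv, hGv]
    rw [Finset.sum_congr rfl fun ab _ => h1 ab]
    rw [← Finset.sum_fiberwise univ (fun ab : G × G => (part A ab.1, part A ab.2))
      (fun ab => if ab.1 * ab.2 = z then Fv (part A ab.1) * Gv (part A ab.2) else 0)]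
    refine Finset.sum_congr rfl fun WV _ => ?_
    have h2 : ∀ ab ∈ univ.filter fun ab : G × G => (part A ab.1, part A ab.2) = WV,
        (if ab.1 * ab.2 = z then Fv (part A ab.1) * Gv (part A ab.2) else 0) =
        (if ab.1 * ab.2 = z then Fv WV.1 * Gv WV.2 else 0) := by
      intro ab hab
      rw [Finset.mem_filter] at hab
      rw [← hab.2]
    rw [Finset.sum_congr rfl h2, Finset.sum_ite, Finset.sum_const_zero, add_zero,
      Finset.sum_const, Finset.filter_filter, nsmul_eq_mul, mul_comm]
  rw [key z₁, key z₂]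
  refine Finset.sum_congr rfl fun WV _ => ?_
  congr 2
  by_cases hW : WV.1 ∈ A.parts
  · by_cases hV : WV.2 ∈ A.parts
    · have hcond : ∀ (z : G) (ab : G × G),
          ((part A ab.1, part A ab.2) = WV ∧ ab.1 * ab.2 = z) ↔
          (ab.1 ∈ WV.1 ∧ ab.2 ∈ WV.2 ∧ ab.1 * ab.2 = z) := by
        intro z ab
        constructor
        · rintro ⟨h, hz⟩
          rw [Prod.ext_iff] at h
          exact ⟨h.1 ▸ mem_part A ab.1, h.2 ▸ mem_part A ab.2, hz⟩
        · rintro ⟨h1, h2, hz⟩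
          exact ⟨Prod.ext (part_eq A hW h1) (part_eq A hV h2), hz⟩
      have hsc := A.struct_const WV.1 hW WV.2 hV Z hZ z₁ hz₁ z₂ hz₂
      rw [ncard_eq_card_filter, ncard_eq_card_filter] at hsc
      calc #(univ.filter fun ab : G × G => (part A ab.1, part A ab.2) = WV ∧ ab.1 * ab.2 = z₁)
          = #(univ.filter fun ab : G × G => ab.1 ∈ WV.1 ∧ ab.2 ∈ WV.2 ∧ ab.1 * ab.2 = z₁) := by
            congr 1; ext ab; simp only [Finset.mem_filter]; rw [hcond z₁ ab]
        _ = #(univ.filter fun ab : G × G => ab.1 ∈ WV.1 ∧ ab.2 ∈ WV.2 ∧ ab.1 * ab.2 = z₂) := hsc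
        _ = #(univ.filter fun ab : G × G => (part A ab.1, part A ab.2) = WV ∧ ab.1 * ab.2 = z₂) := by
            congr 1; ext ab; simp only [Finset.mem_filter]; rw [hcond z₂ ab]
    · have hempty : ∀ z : G, (univ.filter fun ab : G × G =>
          (part A ab.1, part A ab.2) = WV ∧ ab.1 * ab.2 = z) = ∅ := by
        intro z
        refine Finset.filter_eq_empty_iff.2 fun {ab} _ => ?_
        rintro ⟨h, -⟩
        rw [Prod.ext_iff] at h
        exact hV (h.2 ▸ part_mem A ab.2)
      rw [hempty z₁, hempty z₂]
  · have hempty : ∀ z : G, (univ.filter fun ab : G × G =>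
        (part A ab.1, part A ab.2) = WV ∧ ab.1 * ab.2 = z) = ∅ := by
      intro z
      refine Finset.filter_eq_empty_iff.2 fun {ab} _ => ?_
      rintro ⟨h, -⟩
      rw [Prod.ext_iff] at h
      exact hW (h.1 ▸ part_mem A ab.1)
    rw [hempty z₁, hempty z₂]

lemma AConst_one {p : ℕ} {A : SchurRing G} : AConst p A 1 := by
  classical
  intro Z hZ z₁ hz₁ z₂ hz₂
  by_cases h : z₁ = 1
  · have hZ1 : Z = {1} := part_unique A hZ A.one_mem (h ▸ hz₁) rfl
    have h2 : z₂ = 1 := by rw [hZ1] at hz₂; exact hz₂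
    rw [h, h2]
  · have h2 : z₂ ≠ 1 := by
      intro h2
      have hZ1 : Z = {1} := part_unique A hZ A.one_mem (h2 ▸ hz₂) rfl
      exact h (by rw [hZ1] at hz₁; exact hz₁)
    rw [MonoidAlgebra.one_def]
    rw [MonoidAlgebra.coeff_single]
    rw [Finsupp.single_apply, Finsupp.single_apply, if_neg (fun hh => h hh.symm),
      if_neg (fun hh => h2 hh.symm)]

lemma AConst.pow [Fintype G] {p : ℕ} {A : SchurRing G} {f : MonoidAlgebra (ZMod p) G}
    (hf : AConst p A f) : ∀ n : ℕ, AConst p A (f ^ n) := by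
  intro n
  induction n with
  | zero => simpa using (AConst_one : AConst p A 1)
  | succ n ih => rw [pow_succ]; exact ih.mul hf

end Mul

section Xi

variable {H : Type*} [CommGroup H] [Fintype H]

/-- The indicator element `ξ(S)` of a subset in the group algebra. -/
noncomputable def xi (p : ℕ) (S : Set H) : MonoidAlgebra (ZMod p) H :=
  ∑ x ∈ S.toFinset, MonoidAlgebra.single x 1

lemma xi_apply (p : ℕ) (S : Set H) (y : H) :
    (xi p S).coeff y = if y ∈ S then 1 else 0 := by
  classical
  rw [xi, MonoidAlgebra.coeff_sum, Finset.sum_apply']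
  simp_rw [MonoidAlgebra.coeff_single, Finsupp.single_apply]
  rw [Finset.sum_ite_eq']
  simp [Set.mem_toFinset]

lemma AConst_xi (p : ℕ) (A : SchurRing H) {X : Set H} (hX : X ∈ A.parts) :
    AConst p A (xi p X) := by
  intro Z hZ z₁ hz₁ z₂ hz₂
  rw [xi_apply, xi_apply]
  by_cases h : z₁ ∈ X
  · have hZX : Z = X := part_unique A hZ hX hz₁ h
    rw [if_pos h, if_pos (hZX ▸ hz₂)]
  · have h2 : z₂ ∉ X := by
      intro h2
      exact h ((part_unique A hZ hX hz₂ h2) ▸ hz₁)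
    rw [if_neg h, if_neg h2]

lemma monoidAlgebra_charP (p : ℕ) [NeZero p] :
    CharP (MonoidAlgebra (ZMod p) H) p := by
  refine charP_of_injective_ringHom (R := ZMod p)
    (f := MonoidAlgebra.singleOneRingHom) ?_ p
  intro a b hab
  exact Finsupp.single_injective 1 (congrArg MonoidAlgebra.coeff hab)

lemma xi_pow_apply (p : ℕ) (hp : p.Prime) (X : Set H) (y : H) :
    (xi p X ^ p).coeff y = ((X.toFinset.filter fun x => x ^ p = y).card : ZMod p) := by
  classical
  haveI : Fact p.Prime := ⟨hp⟩
  haveI : CharP (MonoidAlgebra (ZMod p) H) p := monoidAlgebra_charP p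
  rw [xi, sum_pow_char]
  simp_rw [MonoidAlgebra.single_pow, one_pow]
  rw [MonoidAlgebra.coeff_sum, Finset.sum_apply']
  simp_rw [MonoidAlgebra.coeff_single, Finsupp.single_apply]
  rw [Finset.sum_boole]

end Xi

end SchurRingAux

open SchurRingAux Finset in
/-- Schur–Wielandt: the set `X^{[p]} = {x^p : x ∈ X, |xH ∩ X| ≢ 0 (mod p)}`, with
`H = {g : g^p = 1}`, is an `A`-set for any basic set `X` and prime `p` dividing `|G|`. -/
theorem schurRing_pPower_isASet {G : Type*} [CommGroup G] [Fintype G]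
    (A : SchurRing G) (X : Set G) (hX : X ∈ A.parts)
    (p : ℕ) (hp : p.Prime) (hpG : p ∣ Fintype.card G) :
    A.IsASet {y : G | ∃ x ∈ X, y = x ^ p ∧
      ¬ (p ∣ Set.ncard {z : G | z ∈ X ∧ (x⁻¹ * z) ^ p = 1})} := by
  classical
  set c : G → ℕ := fun y => (X.toFinset.filter fun x => x ^ p = y).card with hc
  have hcy : ∀ x : G, x ∈ X → Set.ncard {z : G | z ∈ X ∧ (x⁻¹ * z) ^ p = 1} = c (x ^ p) := by
    intro x hx
    have hset : {z : G | z ∈ X ∧ (x⁻¹ * z) ^ p = 1} = {z : G | z ∈ X ∧ z ^ p = x ^ p} := by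
      ext z
      simp only [Set.mem_setOf_eq, and_congr_right_iff]
      intro _
      rw [mul_pow, inv_pow, inv_mul_eq_one]
      exact eq_comm
    rw [hset, ncard_eq_card_filter]
    rw [hc]
    congr 1
    ext z
    simp [Set.mem_toFinset]
  have hchar : ∀ w : G,
      (w ∈ {y : G | ∃ x ∈ X, y = x ^ p ∧
        ¬ (p ∣ Set.ncard {z : G | z ∈ X ∧ (x⁻¹ * z) ^ p = 1})}) ↔ (xi p X ^ p).coeff w ≠ 0 := by
    intro w
    rw [xi_pow_apply p hp, Ne, ZMod.natCast_eq_zero_iff]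
    constructor
    · rintro ⟨x, hx, rfl, hnd⟩
      rwa [hcy x hx] at hnd
    · intro hnd
      have hpos : (X.toFinset.filter fun x => x ^ p = w).card ≠ 0 := by
        intro h0
        exact hnd (by rw [h0]; exact dvd_zero p)
      obtain ⟨x, hxmem⟩ := Finset.card_pos.mp (Nat.pos_of_ne_zero hpos)
      rw [Finset.mem_filter, Set.mem_toFinset] at hxmem
      refine ⟨x, hxmem.1, hxmem.2.symm, ?_⟩
      rw [hcy x hxmem.1, hxmem.2]
      exact hnd
  intro y hy
  obtain ⟨Z, hZ, hyZ⟩ := A.cover y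
  refine ⟨Z, hZ, hyZ, ?_⟩
  intro z hz
  have hA : AConst p A (xi p X ^ p) := (AConst_xi p A hX).pow p
  rw [hchar z, hA Z hZ z hz y hyZ]
  exact (hchar y).1 hy
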